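/- The 5-dimensional nilpotent commutative associative algebra A₀₈ degenerates to A₁₆: the structure λ of A₁₆ lies in the closure of the GL(5,ℂ)-orbit O(μ) of the structure μ of A₀₈ (closure in the standard topology on the space of bilinear maps ℂ⁵ × ℂ⁵ → ℂ⁵). -/

import Mathlib

open ContinuousLinearMap

/-- The underlying space `ℂⁿ`. -/
abbrev Vn (n : ℕ) := Fin n → ℂ

/-- The space of bilinear maps `ℂⁿ × ℂⁿ → ℂⁿ` (as continuous linear maps in two
arguments), carrying its standard topology as a finite-dimensional complex vector space. -/
abbrev Bil (n : ℕ) := Vn n →L[ℂ] Vn n →L[ℂ] Vn n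

/-- The action of `GL(n, ℂ)` on bilinear maps: `(g · μ)(x, y) = g (μ (g⁻¹ x) (g⁻¹ y))`. -/
noncomputable def act {n : ℕ} (g : Vn n ≃L[ℂ] Vn n) (μ : Bil n) : Bil n :=
  ((compL ℂ (Vn n) (Vn n) (Vn n)).flip (g.symm : Vn n →L[ℂ] Vn n)).comp
    (((compL ℂ (Vn n) (Vn n) (Vn n)) (g : Vn n →L[ℂ] Vn n)).comp
      (μ.comp (g.symm : Vn n →L[ℂ] Vn n)))

@[simp] lemma act_apply {n : ℕ} (g : Vn n ≃L[ℂ] Vn n) (μ : Bil n) (x y : Vn n) :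
    act g μ x y = g (μ (g.symm x) (g.symm y)) := rfl

/-- The orbit `O(μ)` of a bilinear map under the `GL(n, ℂ)`-action. -/
noncomputable def orbit {n : ℕ} (μ : Bil n) : Set (Bil n) :=
  {ν | ∃ g : Vn n ≃L[ℂ] Vn n, ν = act g μ}

/-- The standard basis `e₁, …, e₅` of `ℂ⁵` (zero-indexed: `e i` is `e_{i+1}`). -/
def e (i : Fin 5) : Vn 5 := Pi.single i 1

/-- Multiplication table of the algebra `𝐀08` (entry `(i, j)` is `eᵢ · eⱼ`). -/
def tblA08 : Fin 5 → Fin 5 → Vn 5 :=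
  ![![e 2, e 4, e 3, 0, 0],
   ![e 4, e 3, 0, 0, 0],
   ![e 3, 0, 0, 0, 0],
   ![0, 0, 0, 0, 0],
   ![0, 0, 0, 0, 0]]

/-- Multiplication table of the algebra `𝐀16` (entry `(i, j)` is `eᵢ · eⱼ`). -/
def tblA16 : Fin 5 → Fin 5 → Vn 5 :=
  ![![e 2, e 3, 0, 0, 0],
   ![e 3, e 4, 0, 0, 0],
   ![0, 0, 0, 0, 0],
   ![0, 0, 0, 0, 0],
   ![0, 0, 0, 0, 0]]


/-! ### Auxiliary constructions for the degeneration -/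

/-- Forward map of the parametric basis change. -/
noncomputable def gf (t : ℂ) (x : Vn 5) : Vn 5 :=
  ![t⁻¹ * x 0, x 1, t⁻¹ * t⁻¹ * x 2, t⁻¹ * x 4, x 3]

/-- Inverse map of the parametric basis change. -/
noncomputable def gi (t : ℂ) (x : Vn 5) : Vn 5 :=
  ![t * x 0, x 1, t * t * x 2, x 4, t * x 3]

noncomputable def gE (t : ℂ) (ht : t ≠ 0) : Vn 5 ≃ₗ[ℂ] Vn 5 where
  toFun := gf t
  invFun := gi t
  map_add' x y := by funext k; fin_cases k <;> simp [gf] <;> ring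
  map_smul' c x := by funext k; fin_cases k <;> simp [gf] <;> ring
  left_inv x := by funext k; fin_cases k <;> simp [gf, gi] <;> field_simp
  right_inv x := by funext k; fin_cases k <;> simp [gf, gi] <;> field_simp

noncomputable def gC (t : ℂ) (ht : t ≠ 0) : Vn 5 ≃L[ℂ] Vn 5 :=
  (gE t ht).toContinuousLinearEquiv

/-- The "direction" of the degeneration: `D (e 0) (e 2) = D (e 2) (e 0) = e 4`. -/
noncomputable def D : Bil 5 :=
  ((ContinuousLinearMap.proj (R := ℂ) (φ := fun _ : Fin 5 => ℂ) 0).smulRight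
    ((ContinuousLinearMap.proj (R := ℂ) (φ := fun _ : Fin 5 => ℂ) 2).smulRight (e 4))) +
  ((ContinuousLinearMap.proj (R := ℂ) (φ := fun _ : Fin 5 => ℂ) 2).smulRight
    ((ContinuousLinearMap.proj (R := ℂ) (φ := fun _ : Fin 5 => ℂ) 0).smulRight (e 4)))

lemma gi_e0 (t : ℂ) : gi t (e 0) = t • e 0 := by funext k; fin_cases k <;> simp [gi, e]
lemma gi_e1 (t : ℂ) : gi t (e 1) = e 1 := by funext k; fin_cases k <;> simp [gi, e]
lemma gi_e2 (t : ℂ) : gi t (e 2) = (t*t) • e 2 := by funext k; fin_cases k <;> simp [gi, e]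
lemma gi_e3 (t : ℂ) : gi t (e 3) = t • e 4 := by funext k; fin_cases k <;> simp [gi, e]
lemma gi_e4 (t : ℂ) : gi t (e 4) = e 3 := by funext k; fin_cases k <;> simp [gi, e]
lemma gf_e2 (t : ℂ) : gf t (e 2) = (t⁻¹*t⁻¹) • e 2 := by funext k; fin_cases k <;> simp [gf, e]
lemma gf_e3 (t : ℂ) : gf t (e 3) = e 4 := by funext k; fin_cases k <;> simp [gf, e]
lemma gf_e4 (t : ℂ) : gf t (e 4) = t⁻¹ • e 3 := by funext k; fin_cases k <;> simp [gf, e]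

set_option maxHeartbeats 1000000 in
set_option synthInstance.maxHeartbeats 400000 in
lemma key (μ lam : Bil 5)
    (hμ : ∀ i j : Fin 5, μ (e i) (e j) = tblA08 i j)
    (hlam : ∀ i j : Fin 5, lam (e i) (e j) = tblA16 i j)
    (t : ℂ) (ht : t ≠ 0) :
    act (gC t ht) μ = lam + t^3 • D := by
  apply ContinuousLinearMap.coe_injective
  refine Module.Basis.ext (Pi.basisFun ℂ (Fin 5)) fun i => ?_
  apply ContinuousLinearMap.coe_injective
  refine Module.Basis.ext (Pi.basisFun ℂ (Fin 5)) fun j => ?_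
  have hb : ∀ k : Fin 5, (Pi.basisFun ℂ (Fin 5)) k = e k := by
    intro k; simp [e, Pi.basisFun_apply]
  simp only [ContinuousLinearMap.coe_coe, hb]
  show act (gC t ht) μ (e i) (e j) = (lam + t^3 • D) (e i) (e j)
  have hsymm : ∀ x, (gC t ht).symm x = gi t x := fun _ => rfl
  have h2 : (gC t ht) (e 2) = (t⁻¹*t⁻¹) • e 2 := gf_e2 t
  have h3 : (gC t ht) (e 3) = e 4 := gf_e3 t
  have h4 : (gC t ht) (e 4) = t⁻¹ • e 3 := gf_e4 t
  have hev : ∀ i j : Fin 5, e i j = if j = i then 1 else 0 := by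
    intro i j; simp [e, Pi.single_apply]
  rw [act_apply]
  fin_cases i <;> fin_cases j <;> (
    simp [hsymm, gi_e0, gi_e1, gi_e2, gi_e3, gi_e4, map_smul, smul_smul,
      hμ, hlam, tblA08, tblA16, D, h2, h3, h4, hev, Matrix.vecHead, Matrix.vecTail,
      map_zero]) <;>
    match_scalars <;> field_simp <;> ring

set_option maxHeartbeats 1000000 in
set_option synthInstance.maxHeartbeats 1000000 in

/-- The $5$-dimensional nilpotent commutative associative algebra `𝐀08` degenerates to
`𝐀16`: the structure `λ` of `𝐀16` lies in the closure of
the `GL(5, ℂ)`-orbit `O(μ)` of the structure `μ` of `𝐀08`. -/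
theorem A08_deg_A16 (μ lam : Bil 5)
    (hμ : ∀ i j : Fin 5, μ (e i) (e j) = tblA08 i j)
    (hlam : ∀ i j : Fin 5, lam (e i) (e j) = tblA16 i j) :
    lam ∈ closure (orbit μ) := by
  haveI : IsTopologicalAddGroup (Bil 5) := inferInstance
  haveI : ContinuousAdd (Bil 5) := by
    have h : IsTopologicalAddGroup (Bil 5) := inferInstance
    exact h.toContinuousAdd
  haveI : ContinuousSMul ℂ (Bil 5) := inferInstance
  have hcont : Continuous fun t : ℂ => lam + t ^ 3 • D := by
    fun_prop
  have htend : Filter.Tendsto (fun t : ℂ => lam + t ^ 3 • D) (nhdsWithin 0 {0}ᶜ) (nhds lam) := by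
    have h0 := (hcont.tendsto 0).mono_left (nhdsWithin_le_nhds (s := {0}ᶜ))
    have hz : lam + (0:ℂ) ^ 3 • D = lam := by
      apply ContinuousLinearMap.coe_injective
      refine Module.Basis.ext (Pi.basisFun ℂ (Fin 5)) fun i => ?_
      apply ContinuousLinearMap.coe_injective
      refine Module.Basis.ext (Pi.basisFun ℂ (Fin 5)) fun j => ?_
      simp
    rwa [hz] at h0
  refine mem_closure_of_tendsto htend ?_
  filter_upwards [self_mem_nhdsWithin] with t ht
  exact ⟨gC t ht, (key μ lam hμ hlam t ht).symm⟩
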